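/- Let k be a commutative ring, A a commutative k-algebra, p ∈ ℕ, Δ ⊆ ℕ^p a nonempty co-ideal, F an A-module, and r = (r_α)_{α∈Δ} a family of k-linear maps A → F. Then every r_α is a k-derivation from A to F if and only if the induced map r̃ : A[[s]]_Δ → F[[s]]_Δ is a derivation over k[[s]]_Δ of the ring A[[s]]_Δ with values in the A[[s]]_Δ-module F[[s]]_Δ (i.e. r̃ is k[[s]]_Δ-linear and r̃(ab) = a·r̃(b) + b·r̃(a) for all a, b ∈ A[[s]]_Δ). Consequently, r ↦ r̃ is an A[[s]]_Δ-linear isomorphism Der_k(A,F)[[s]]_Δ ≅ Der_{k[[s]]_Δ}(A[[s]]_Δ, F[[s]]_Δ). -/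

import Mathlib

open scoped Classical

namespace HS

/-- multi-indices in `ℕ^p` -/
abbrev MIdx (p : ℕ) := Fin p → ℕ

/-- the total weight `|α|` of a multi-index -/
def wt {p : ℕ} (α : MIdx p) : ℕ := ∑ i, α i

/-- a non-empty co-ideal of `ℕ^p` -/
def IsCoideal {p : ℕ} (Δ : Set (MIdx p)) : Prop :=
  Δ.Nonempty ∧ ∀ ⦃α : MIdx p⦄, α ∈ Δ → ∀ ⦃β : MIdx p⦄, β ≤ α → β ∈ Δ

/-- Convolution product of two power series, given by their coefficient families:
this is the multiplication of `R[[s]]_Δ` (in terms of representatives). -/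
def sconv {p : ℕ} {R : Type*} [NonUnitalNonAssocSemiring R] (f g : MIdx p → R) : MIdx p → R :=
  fun α => ∑ β ∈ Finset.Iic α, f β * g (α - β)

/-- Applying a series of linear operators to a series of module elements; for an
operator family `f`, `fapply f` is the induced `k[[s]]_Δ`-linear map `f̃ = ∑ f_β s^β`. -/
def fapply {p : ℕ} {k M N : Type*} [Semiring k] [AddCommMonoid M] [AddCommMonoid N]
    [Module k M] [Module k N] (f : MIdx p → (M →ₗ[k] N)) (m : MIdx p → M) : MIdx p → N :=
  fun α => ∑ β ∈ Finset.Iic α, f β (m (α - β))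

/-- a series of scalars acting on a series of module elements:
the module structure of `M[[s]]_Δ` over `A[[s]]_Δ` (in terms of representatives). -/
def smul' {p : ℕ} {A M : Type*} [Semiring A] [AddCommMonoid M] [Module A M]
    (a : MIdx p → A) (m : MIdx p → M) : MIdx p → M :=
  fun α => ∑ β ∈ Finset.Iic α, a β • m (α - β)

/-- the unit (delta) series `1` -/
def one' {p : ℕ} {R : Type*} [Zero R] [One R] : MIdx p → R :=
  fun α => if α = 0 then 1 else 0

/-- `D` is a `(p,Δ)`-variate Hasse–Schmidt derivation of `A` over `k`:
`D_0 = id` and the Leibniz rule `D_α(xy) = ∑_{β+γ=α} D_β(x) D_γ(y)` for `α ∈ Δ`. -/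
def IsHS (k A : Type*) [CommRing k] [CommRing A] [Algebra k A] {p : ℕ}
    (Δ : Set (MIdx p)) (D : MIdx p → Module.End k A) : Prop :=
  D 0 = 1 ∧ ∀ α ∈ Δ, ∀ x y : A,
    D α (x * y) = ∑ β ∈ Finset.Iic α, D β x * D (α - β) y

section Helpers
variable {p : ℕ}

lemma swap_cond (α β γ : MIdx p) : β ∈ Finset.Iic α ∧ γ ∈ Finset.Iic (α - β)
    ↔ β ∈ Finset.Iic (α - γ) ∧ γ ∈ Finset.Iic α := by
  simp only [Finset.mem_Iic, Pi.le_def]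
  constructor <;> intro ⟨h1, h2⟩ <;> constructor <;> intro i <;>
    (have a1 := h1 i; have a2 := h2 i; simp only [Pi.sub_apply] at *; omega)

lemma sum_comm_Iic {M : Type*} [AddCommMonoid M] (α : MIdx p) (F : MIdx p → MIdx p → M) :
    ∑ β ∈ Finset.Iic α, ∑ γ ∈ Finset.Iic (α - β), F β γ
      = ∑ γ ∈ Finset.Iic α, ∑ β ∈ Finset.Iic (α - γ), F β γ :=
  Finset.sum_comm' (fun β γ => swap_cond α β γ)

lemma sum_Iic_reflect {M : Type*} [AddCommMonoid M] (α : MIdx p) (f : MIdx p → M) :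
    ∑ β ∈ Finset.Iic α, f β = ∑ β ∈ Finset.Iic α, f (α - β) := by
  refine Finset.sum_nbij' (fun β => α - β) (fun β => α - β) ?_ ?_ ?_ ?_ ?_ <;>
    intro β hβ <;> simp only [Finset.mem_Iic] at *
  · exact tsub_le_self
  · exact tsub_le_self
  · exact tsub_tsub_cancel_of_le hβ
  · exact tsub_tsub_cancel_of_le hβ
  · rw [tsub_tsub_cancel_of_le hβ]

lemma tsub_comm' (α β γ : MIdx p) : α - β - γ = α - γ - β := tsub_right_comm

/-- reindexing `β = δ + γ` -/
lemma sum_Iic_pairs {M : Type*} [AddCommMonoid M] (α : MIdx p) (F : MIdx p → MIdx p → M) :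
    ∑ β ∈ Finset.Iic α, ∑ δ ∈ Finset.Iic β, F δ (β - δ)
      = ∑ δ ∈ Finset.Iic α, ∑ γ ∈ Finset.Iic (α - δ), F δ γ := by
  have step1 : ∑ β ∈ Finset.Iic α, ∑ δ ∈ Finset.Iic β, F δ (β - δ)
      = ∑ δ ∈ Finset.Iic α, ∑ β ∈ Finset.Icc δ α, F δ (β - δ) := by
    refine Finset.sum_comm' fun β δ => ?_
    simp only [Finset.mem_Iic, Finset.mem_Icc, Pi.le_def]
    constructor
    · intro h; exact ⟨⟨h.2, h.1⟩, fun i => le_trans (h.2 i) (h.1 i)⟩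
    · intro h; exact ⟨h.1.2, h.1.1⟩
  rw [step1]
  refine Finset.sum_congr rfl fun δ hδ => ?_
  simp only [Finset.mem_Iic] at hδ
  refine Finset.sum_nbij' (fun β => β - δ) (fun γ => δ + γ) ?_ ?_ ?_ ?_ ?_
  · intro x hx
    simp only [Finset.mem_Iic, Finset.mem_Icc, Pi.le_def] at *
    intro i; have := hx.1 i; have := hx.2 i; simp only [Pi.sub_apply]; omega
  · intro x hx
    simp only [Finset.mem_Iic, Finset.mem_Icc, Pi.le_def] at *
    constructor <;> intro i <;>
      (have h1 := hx i; have h2 := hδ i; simp only [Pi.sub_apply, Pi.add_apply] at *; omega)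
  · intro x hx
    simp only [Finset.mem_Icc, Pi.le_def] at hx
    funext i; have := hx.1 i; simp only [Pi.add_apply, Pi.sub_apply]; omega
  · intro x hx
    funext i; simp only [Pi.add_apply, Pi.sub_apply]; omega
  · intro x hx; rfl

end Helpers

section Alg
variable {k A F : Type*} [CommRing k] [CommRing A] [Algebra k A]
  [AddCommGroup F] [Module k F] [Module A F] [IsScalarTower k A F] {p : ℕ}

lemma fapply_smul' (r : MIdx p → (A →ₗ[k] F)) (c : MIdx p → k) (a : MIdx p → A) (α : MIdx p) :
    fapply r (smul' c a) α = smul' c (fapply r a) α := by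
  unfold fapply smul'
  have : ∀ β ∈ Finset.Iic α, r β (∑ γ ∈ Finset.Iic (α - β), c γ • a (α - β - γ))
      = ∑ γ ∈ Finset.Iic (α - β), c γ • r β (a (α - γ - β)) := by
    intro β _
    rw [map_sum]
    exact Finset.sum_congr rfl fun γ _ => by rw [map_smul, tsub_right_comm]
  rw [Finset.sum_congr rfl this, sum_comm_Iic]
  exact Finset.sum_congr rfl fun γ _ => (Finset.smul_sum).symm

lemma fapply_leibniz {Δ : Set (MIdx p)} (hΔ : IsCoideal Δ) (r : MIdx p → (A →ₗ[k] F))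
    (hder : ∀ β ∈ Δ, ∀ x y : A, r β (x * y) = x • r β y + y • r β x)
    (a b : MIdx p → A) {α : MIdx p} (hα : α ∈ Δ) :
    fapply r (sconv a b) α = smul' a (fapply r b) α + smul' b (fapply r a) α := by
  unfold fapply sconv smul'
  have step : ∀ β ∈ Finset.Iic α, r β (∑ γ ∈ Finset.Iic (α - β), a γ * b (α - β - γ))
      = (∑ γ ∈ Finset.Iic (α - β), a γ • r β (b (α - β - γ)))
        + ∑ γ ∈ Finset.Iic (α - β), b γ • r β (a (α - β - γ)) := by
    intro β hβ
    have hβΔ : β ∈ Δ := hΔ.2 hα (Finset.mem_Iic.mp hβ)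
    rw [map_sum]
    rw [show (∑ γ ∈ Finset.Iic (α - β), r β (a γ * b (α - β - γ)))
        = ∑ γ ∈ Finset.Iic (α - β), (a γ • r β (b (α - β - γ)) + b (α - β - γ) • r β (a γ))
      from Finset.sum_congr rfl fun γ _ => hder β hβΔ _ _]
    rw [Finset.sum_add_distrib]
    congr 1
    rw [sum_Iic_reflect (α - β) (fun γ => b (α - β - γ) • r β (a γ))]
    refine Finset.sum_congr rfl fun γ hγ => ?_
    rw [tsub_tsub_cancel_of_le (Finset.mem_Iic.mp hγ)]
  rw [Finset.sum_congr rfl step, Finset.sum_add_distrib]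
  congr 1
  · rw [sum_comm_Iic α (fun β γ => a γ • r β (b (α - β - γ)))]
    refine Finset.sum_congr rfl fun γ _ => ?_
    rw [Finset.smul_sum]
    exact Finset.sum_congr rfl fun β _ => by rw [tsub_right_comm]
  · rw [sum_comm_Iic α (fun β γ => b γ • r β (a (α - β - γ)))]
    refine Finset.sum_congr rfl fun γ _ => ?_
    rw [Finset.smul_sum]
    exact Finset.sum_congr rfl fun β _ => by rw [tsub_right_comm]

end Alg

section Unit
variable {p : ℕ}

/-- constant series `x·s^0` -/
def unit {R : Type*} [Zero R] (x : R) : MIdx p → R := fun β => if β = 0 then x else 0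

/-- delta series `s^γ` -/
def delta {R : Type*} [Zero R] [One R] (γ : MIdx p) : MIdx p → R :=
  fun β => if β = γ then 1 else 0

variable {k A F : Type*} [CommRing k] [CommRing A] [Algebra k A]
  [AddCommGroup F] [Module k F] [Module A F] [IsScalarTower k A F]

set_option linter.unusedSectionVars false

lemma fapply_unit (r : MIdx p → (A →ₗ[k] F)) (x : A) (α : MIdx p) :
    fapply r (unit x) α = r α x := by
  unfold fapply unit
  rw [Finset.sum_eq_single α]
  · simp
  · intro β hβ hne
    have hle := Finset.mem_Iic.mp hβ
    have : ¬ α - β = 0 := by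
      intro h
      refine hne (le_antisymm hle fun i => ?_)
      have h1 : α i - β i = 0 := congrFun h i
      have h2 : β i ≤ α i := hle i
      show α i ≤ β i
      omega
    simp [this]
  · intro h; exact absurd (Finset.mem_Iic.mpr le_rfl) h

lemma smul'_unit {M : Type*} [AddCommMonoid M] [Module A M] (x : A) (m : MIdx p → M)
    (α : MIdx p) : smul' (unit x) m α = x • m α := by
  unfold smul' unit
  rw [Finset.sum_eq_single 0]
  · simp
  · intro β _ hne; simp [hne]
  · intro h; exact absurd (Finset.mem_Iic.mpr zero_le) h

lemma sconv_unit (x y : A) : sconv (unit (p := p) x) (unit y) = unit (x * y) := by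
  funext ρ
  unfold sconv unit
  rw [Finset.sum_eq_single 0]
  · by_cases h : ρ = 0 <;> simp [h]
  · intro β _ hne; simp [hne]
  · intro h; exact absurd (Finset.mem_Iic.mpr zero_le) h

/-- shift by `γ` -/
noncomputable def shift {M : Type*} [Zero M] (γ : MIdx p) (m : MIdx p → M) : MIdx p → M :=
  fun ρ => if γ ≤ ρ then m (ρ - γ) else 0

lemma smul'_delta {M : Type*} [AddCommMonoid M] [Module k M] (γ : MIdx p) (m : MIdx p → M)
    (α : MIdx p) : smul' (delta (R := k) γ) m α = shift γ m α := by
  unfold smul' delta shift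
  have : ∀ β ∈ Finset.Iic α, (if β = γ then (1:k) else 0) • m (α - β)
      = if β = γ then m (α - β) else 0 := by
    intro β _; split <;> simp
  rw [Finset.sum_congr rfl this, Finset.sum_ite_eq' (Finset.Iic α) γ (fun β => m (α - β))]
  by_cases h : γ ≤ α <;> simp [h, Finset.mem_Iic]

end Unit

section More
variable {p : ℕ}

lemma fapply_congr {k M N : Type*} [Semiring k] [AddCommMonoid M] [AddCommMonoid N]
    [Module k M] [Module k N] (f : MIdx p → (M →ₗ[k] N)) {a a' : MIdx p → M} (α : MIdx p)
    (h : ∀ β ≤ α, a β = a' β) : fapply f a α = fapply f a' α :=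
  Finset.sum_congr rfl fun β _ => by rw [h _ tsub_le_self]

lemma smul'_congr {A M : Type*} [Semiring A] [AddCommMonoid M] [Module A M]
    (a : MIdx p → A) {m m' : MIdx p → M} (α : MIdx p)
    (h : ∀ β ≤ α, m β = m' β) : smul' a m α = smul' a m' α :=
  Finset.sum_congr rfl fun β _ => by rw [h _ tsub_le_self]

variable {k A F : Type*} [CommRing k] [CommRing A] [Algebra k A]
  [AddCommGroup F] [Module k F] [Module A F] [IsScalarTower k A F]

set_option linter.unusedSectionVars false

/-- the key representation lemma for surjectivity -/
lemma surj_aux {Δ : Set (MIdx p)} (hΔ : IsCoideal Δ)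
    (g : (MIdx p → A) → (MIdx p → F))
    (hsupp : ∀ (a : MIdx p → A) (α : MIdx p), α ∉ Δ → g a α = 0)
    (heqon : ∀ a b : MIdx p → A, Set.EqOn a b Δ → g a = g b)
    (hadd : ∀ a b : MIdx p → A, ∀ α ∈ Δ, g (a + b) α = g a α + g b α)
    (hlin : ∀ (c : MIdx p → k) (a : MIdx p → A), ∀ α ∈ Δ,
      g (smul' c a) α = smul' c (g a) α) :
    ∃ r : MIdx p → (A →ₗ[k] F), (∀ α, α ∉ Δ → r α = 0)
      ∧ (∀ α ∈ Δ, ∀ x : A, r α x = g (unit x) α)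
      ∧ (∀ (a : MIdx p → A), ∀ α ∈ Δ, fapply r a α = g a α) := by
  classical
  -- g of zero is zero on Δ
  have gzero : ∀ α ∈ Δ, g 0 α = 0 := by
    intro α hα
    have := hadd 0 0 α hα
    rw [add_zero] at this
    exact (left_eq_add.mp this)
  -- g is finitely additive on Δ
  have gsum : ∀ {ι : Type} (s : Finset ι) (f : ι → (MIdx p → A)), ∀ α ∈ Δ,
      g (∑ i ∈ s, f i) α = ∑ i ∈ s, g (f i) α := by
    intro ι s f α hα
    induction s using Finset.cons_induction with
    | empty => simpa using gzero α hα
    | cons i s hi ih =>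
      rw [Finset.sum_cons, Finset.sum_cons, hadd _ _ α hα, ih]
  -- g commutes with shifts
  have gshift : ∀ (γ : MIdx p) (a : MIdx p → A), ∀ α ∈ Δ,
      g (shift γ a) α = if γ ≤ α then g a (α - γ) else 0 := by
    intro γ a α hα
    have h1 : shift γ a = smul' (delta (R := k) γ) a :=
      funext fun ρ => (smul'_delta γ a ρ).symm
    rw [h1, hlin _ _ α hα, smul'_delta]
    rfl
  -- k-scalar multiplication
  have gsmul : ∀ (c : k) (a : MIdx p → A), ∀ α ∈ Δ, g (fun ρ => c • a ρ) α = c • g a α := by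
    intro c a α hα
    have h1 : (fun ρ => c • a ρ) = smul' (unit c) a :=
      funext fun ρ => (smul'_unit (A := k) c a ρ).symm
    rw [h1, hlin _ _ α hα, smul'_unit]
  -- the coefficient maps
  refine ⟨fun α => if hα : α ∈ Δ then
      { toFun := fun x => g (unit x) α
        map_add' := by
          intro x y
          show g (unit (x + y)) α = g (unit x) α + g (unit y) α
          have : unit (p := p) (x + y) = unit x + unit y := by
            funext ρ; by_cases h : ρ = 0 <;> simp [unit, h]
          rw [this, hadd _ _ α hα]
        map_smul' := by
          intro c x
          show g (unit (c • x)) α = (RingHom.id k) c • g (unit x) α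
          simp only [RingHom.id_apply]
          have : unit (p := p) (c • x) = fun ρ => c • unit x ρ := by
            funext ρ; by_cases h : ρ = 0 <;> simp [unit, h]
          rw [this]
          exact gsmul c _ α hα }
    else 0, fun α hα => dif_neg hα, fun α hα x => by simp only [dif_pos hα]; rfl, ?_⟩
  intro a α hα
  -- `g b α = 0` whenever `b` vanishes below `α`
  have key : ∀ b : MIdx p → A, (∀ ρ ≤ α, b ρ = 0) → g b α = 0 := by
    intro b hb
    set bb : Fin p → (MIdx p → A) := fun i γ =>
      if (∀ j, j < i → γ j ≤ α j) ∧ α i < γ i then b γ else 0 with hbb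
    have hdecomp : b = ∑ i, bb i := by
      funext γ
      rw [Finset.sum_apply]
      by_cases hγ : γ ≤ α
      · rw [hb γ hγ]
        symm
        refine Finset.sum_eq_zero fun i _ => ?_
        have : ¬ (α i < γ i) := not_lt.mpr (hγ i)
        simp [hbb, this]
      · have hex : ∃ i, α i < γ i := by
          by_contra hcon
          exact hγ fun i => not_lt.mp fun hc => hcon ⟨i, hc⟩
        set s : Finset (Fin p) := Finset.univ.filter (fun i => α i < γ i) with hs
        have hsne : s.Nonempty := ⟨hex.choose, by simp [hs, hex.choose_spec]⟩
        set i₀ := s.min' hsne with hi0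
        have hmem : α i₀ < γ i₀ := by
          have := s.min'_mem hsne
          simp [hs] at this
          exact this
        have hleast : ∀ j, j < i₀ → γ j ≤ α j := by
          intro j hj
          by_contra hc
          have : i₀ ≤ j := s.min'_le j (by simp [hs]; omega)
          omega
        rw [Finset.sum_eq_single i₀]
        · simp only [hbb]
          rw [if_pos (And.intro hleast hmem)]
        · intro j _ hne
          rcases lt_or_gt_of_ne hne with hlt | hgt
          · have : ¬ (α j < γ j) := by
              by_contra hc
              have : i₀ ≤ j := s.min'_le j (by simp [hs]; omega)
              omega
            simp [hbb, this]
          · have : ¬ (∀ j', j' < j → γ j' ≤ α j') := by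
              intro hall
              have := hall i₀ hgt
              omega
            simp [hbb, this]
        · intro h; exact absurd (Finset.mem_univ i₀) h
    have hzero : ∀ i : Fin p, g (bb i) α = 0 := by
      intro i
      set γi : MIdx p := fun j => if j = i then α i + 1 else 0 with hγi
      have hrep : bb i = shift γi (fun ρ => bb i (ρ + γi)) := by
        funext ρ
        unfold shift
        by_cases h : γi ≤ ρ
        · rw [if_pos h]
          show bb i ρ = bb i (ρ - γi + γi)
          rw [tsub_add_cancel_of_le h]
        · rw [if_neg h]
          have hρi : ρ i ≤ α i := by
            by_contra hc
            refine h fun j => ?_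
            by_cases hj : j = i <;> simp [hγi, hj] <;> omega
          have : ¬ (α i < ρ i) := by omega
          simp [hbb, this]
      have hnle : ¬ γi ≤ α := by
        intro hle
        have := hle i
        simp [hγi] at this
      rw [hrep, gshift _ _ α hα, if_neg hnle]
    rw [hdecomp, gsum _ _ α hα]
    exact Finset.sum_eq_zero fun i _ => hzero i
  -- truncation
  set a' : MIdx p → A := fun ρ => if ρ ≤ α then a ρ else 0 with ha'
  have hsplit : g a α = g a' α + g (a - a') α := by
    conv_lhs => rw [show a = a' + (a - a') by abel]
    exact hadd _ _ α hα
  have hvanish : g (a - a') α = 0 := by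
    refine key _ fun ρ hρ => ?_
    simp [ha', Pi.sub_apply, if_pos hρ]
  have hdecomp' : a' = ∑ β ∈ Finset.Iic α, shift β (unit (a β)) := by
    funext ρ
    rw [Finset.sum_apply]
    have hterm : ∀ β, shift β (unit (a β)) ρ = if ρ = β then a β else 0 := by
      intro β
      unfold shift unit
      by_cases h : β ≤ ρ
      · rw [if_pos h]
        by_cases h2 : ρ = β
        · subst h2; simp
        · have : ¬ (ρ - β = 0) := by
            intro hc
            refine h2 (le_antisymm (fun i => ?_) h)
            have h1 : ρ i - β i = 0 := congrFun hc i
            have h2 := h i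
            show ρ i ≤ β i
            omega
          rw [if_neg this, if_neg h2]
      · rw [if_neg h, if_neg (fun hc : ρ = β => h (hc ▸ le_rfl))]
    rw [Finset.sum_congr rfl fun β _ => hterm β, Finset.sum_ite_eq (Finset.Iic α) ρ (fun β => a β)]
    by_cases h : ρ ≤ α <;> simp [ha', h, Finset.mem_Iic]
  have hga' : g a' α = ∑ β ∈ Finset.Iic α, g (unit (a β)) (α - β) := by
    rw [hdecomp', gsum _ _ α hα]
    refine Finset.sum_congr rfl fun β hβ => ?_
    rw [gshift _ _ α hα, if_pos (Finset.mem_Iic.mp hβ)]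
  -- put it together
  conv_rhs => rw [hsplit, hvanish, add_zero, hga']
  unfold fapply
  rw [sum_Iic_reflect α (fun β => g (unit (a β)) (α - β))]
  refine Finset.sum_congr rfl fun β hβ => ?_
  have hβα := Finset.mem_Iic.mp hβ
  have hβΔ : β ∈ Δ := hΔ.2 hα hβα
  rw [tsub_tsub_cancel_of_le hβα]
  simp only [dif_pos hβΔ]
  rfl

end More

/-- For a family `r = (r_α)_{α∈Δ}` of `k`-linear maps `A → F`, every
`r_α` (`α ∈ Δ`) is a `k`-derivation iff the induced `k[[s]]_Δ`-linear map
`r̃ : A[[s]]_Δ → F[[s]]_Δ` is a derivation over `k[[s]]_Δ`; consequently `r ↦ r̃` is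
an `A[[s]]_Δ`-linear isomorphism `Der_k(A,F)[[s]]_Δ ≅ Der_{k[[s]]_Δ}(A[[s]]_Δ, F[[s]]_Δ)`
(maps `A[[s]]_Δ → F[[s]]_Δ` being modelled as maps on coefficient families which
descend to the quotients, i.e. respect agreement on `Δ`, normalized to have values
supported in `Δ`). -/
theorem stmt2 (k A F : Type*) [CommRing k] [CommRing A] [Algebra k A]
    [AddCommGroup F] [Module k F] [Module A F] [IsScalarTower k A F]
    (p : ℕ) (Δ : Set (MIdx p)) (hΔ : IsCoideal Δ)
    (r : MIdx p → (A →ₗ[k] F)) :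
    -- the equivalence
    ((∀ α ∈ Δ, ∀ x y : A, r α (x * y) = x • r α y + y • r α x)
      ↔ ((∀ (c : MIdx p → k) (a : MIdx p → A), ∀ α ∈ Δ,
            fapply r (smul' c a) α = smul' c (fapply r a) α)
          ∧ (∀ a b : MIdx p → A, ∀ α ∈ Δ,
            fapply r (sconv a b) α = smul' a (fapply r b) α + smul' b (fapply r a) α)))
    -- consequently: `r ↦ r̃` is a bijection from `Der_k(A,F)[[s]]_Δ` onto
    -- `Der_{k[[s]]_Δ}(A[[s]]_Δ, F[[s]]_Δ)` ...
    ∧ Set.BijOn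
        (fun (r : MIdx p → (A →ₗ[k] F)) (a : MIdx p → A) (α : MIdx p) =>
          if α ∈ Δ then fapply r a α else 0)
        {r : MIdx p → (A →ₗ[k] F) | (∀ α : MIdx p, α ∉ Δ → r α = 0)
          ∧ ∀ α ∈ Δ, ∀ x y : A, r α (x * y) = x • r α y + y • r α x}
        {g : (MIdx p → A) → (MIdx p → F) |
          (∀ (a : MIdx p → A) (α : MIdx p), α ∉ Δ → g a α = 0)
          ∧ (∀ a b : MIdx p → A, Set.EqOn a b Δ → g a = g b)
          ∧ (∀ a b : MIdx p → A, ∀ α ∈ Δ, g (a + b) α = g a α + g b α)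
          ∧ (∀ (c : MIdx p → k) (a : MIdx p → A), ∀ α ∈ Δ,
              g (smul' c a) α = smul' c (g a) α)
          ∧ (∀ a b : MIdx p → A, ∀ α ∈ Δ,
              g (sconv a b) α = smul' a (g b) α + smul' b (g a) α)}
    -- ... which is `A[[s]]_Δ`-linear (additivity and `A[[s]]_Δ`-homogeneity of `r ↦ r̃`)
    ∧ (∀ r₁ r₂ : MIdx p → (A →ₗ[k] F), ∀ a : MIdx p → A, ∀ α ∈ Δ,
        fapply (r₁ + r₂) a α = fapply r₁ a α + fapply r₂ a α)
    ∧ (∀ (aS : MIdx p → A) (r₁ : MIdx p → (A →ₗ[k] F)) (b : MIdx p → A), ∀ α ∈ Δ,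
        fapply (fun γ => ∑ β ∈ Finset.Iic γ, aS β • r₁ (γ - β)) b α
          = smul' aS (fapply r₁ b) α) := by
  classical
  refine ⟨?_, ⟨?_, ?_, ?_⟩, ?_, ?_⟩
  -- Part 1: the equivalence
  · constructor
    · intro hder
      exact ⟨fun c a α _ => fapply_smul' r c a α,
        fun a b α hα => fapply_leibniz hΔ r hder a b hα⟩
    · rintro ⟨-, hL⟩ α hα x y
      have h := hL (unit x) (unit y) α hα
      rw [sconv_unit] at h
      simp only [fapply_unit, smul'_unit] at h
      exact h
  -- Part 2a: MapsTo
  · rintro r' ⟨hz, hd⟩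
    refine ⟨fun a α hα => if_neg hα, ?_, ?_, ?_, ?_⟩
    · intro a b hab
      funext α
      by_cases hα : α ∈ Δ
      · simp only [if_pos hα]
        exact fapply_congr r' α fun β hβ => hab (hΔ.2 hα hβ)
      · simp only [if_neg hα]
    · intro a b α hα
      simp only [if_pos hα]
      unfold fapply
      rw [← Finset.sum_add_distrib]
      exact Finset.sum_congr rfl fun β _ => by rw [Pi.add_apply, map_add]
    · intro c a α hα
      simp only [if_pos hα]
      rw [fapply_smul' r' c a α]
      exact smul'_congr c α fun β hβ => (if_pos (hΔ.2 hα hβ)).symm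
    · intro a b α hα
      simp only [if_pos hα]
      rw [fapply_leibniz hΔ r' hd a b hα]
      rw [smul'_congr a α (m' := fun α => if α ∈ Δ then fapply r' b α else 0)
          fun β hβ => (if_pos (hΔ.2 hα hβ)).symm,
        smul'_congr b α (m' := fun α => if α ∈ Δ then fapply r' a α else 0)
          fun β hβ => (if_pos (hΔ.2 hα hβ)).symm]
  -- Part 2b: InjOn
  · intro r₁ h₁ r₂ h₂ heq
    funext α
    by_cases hα : α ∈ Δ
    · refine LinearMap.ext fun x => ?_
      have h := congrFun (congrFun heq (unit x)) α
      simp only [if_pos hα, fapply_unit] at h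
      exact h
    · rw [h₁.1 α hα, h₂.1 α hα]
  -- Part 2c: SurjOn
  · rintro g ⟨hsupp, heqon, hadd, hlin, hleib⟩
    obtain ⟨r', hz, hu, hfa⟩ := surj_aux hΔ g hsupp heqon hadd hlin
    refine ⟨r', ⟨hz, ?_⟩, ?_⟩
    · intro α hα x y
      rw [hu α hα, hu α hα, hu α hα, ← sconv_unit, hleib _ _ α hα, smul'_unit, smul'_unit]
    · funext a α
      by_cases hα : α ∈ Δ
      · simp only [if_pos hα]
        exact hfa a α hα
      · simp only [if_neg hα]
        exact (hsupp a α hα).symm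
  -- Part 3: additivity in r
  · intro r₁ r₂ a α hα
    unfold fapply
    rw [← Finset.sum_add_distrib]
    exact Finset.sum_congr rfl fun β _ => by rw [Pi.add_apply, LinearMap.add_apply]
  -- Part 4: A[[s]]-homogeneity in r
  · intro aS r₁ b α hα
    unfold fapply smul'
    have step1 : ∀ β ∈ Finset.Iic α,
        (∑ δ ∈ Finset.Iic β, aS δ • r₁ (β - δ)) (b (α - β))
          = ∑ δ ∈ Finset.Iic β, aS δ • r₁ (β - δ) (b (α - δ - (β - δ))) := by
      intro β hβ
      rw [LinearMap.coe_sum, Finset.sum_apply]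
      refine Finset.sum_congr rfl fun δ hδ => ?_
      rw [LinearMap.smul_apply, tsub_tsub, add_tsub_cancel_of_le (Finset.mem_Iic.mp hδ)]
    rw [Finset.sum_congr rfl step1,
      sum_Iic_pairs α (fun δ γ => aS δ • r₁ γ (b (α - δ - γ)))]
    exact Finset.sum_congr rfl fun δ _ => (Finset.smul_sum).symm

end HS
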